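/- Let p > 2 and 𝒰 a nonprincipal ultrafilter on ℕ. Define M = {(f_n)_{n,𝒰} ∈ (L^p)^𝒰 : lim_{n,𝒰} ‖f_n‖_2 = 0} and let R be the projection R[(f_n)_{n,𝒰}] = lim_{r→∞}(f_n I(|f_n|>r))_{n,𝒰}. Then R[(f_n)_{n,𝒰}] ∈ M for every (f_n)_{n,𝒰} ∈ (L^p)^𝒰, and R[(f_n)_{n,𝒰}] = (f_n)_{n,𝒰} for every (f_n)_{n,𝒰} ∈ M; i.e., M = ran R. -/

import Mathlib

open MeasureTheory Filter Set ENNReal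

noncomputable section

def μ01 : Measure ℝ := volume.restrict (Set.Icc (0:ℝ) 1)

def lpNorm (p : ℝ) (f : ℝ → ℝ) : ℝ := (eLpNorm f (ENNReal.ofReal p) μ01).toReal

/-- `g` represents `R[(f_n)_{n,𝒰}] = lim_{r→∞}(f_n I(|f_n|>r))_{n,𝒰}`. -/
def RImage (U : Ultrafilter ℕ) (p : ℝ) (f g : ℕ → ℝ → ℝ) : Prop :=
  ∀ ε > (0:ℝ), ∃ r0 : ℝ, ∀ r ≥ r0,
    {n : ℕ | lpNorm p (fun x => ({y : ℝ | r < |f n y|}.indicator (f n)) x - g n x) < ε} ∈ U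

instance : IsProbabilityMeasure μ01 := by
  constructor
  simp [μ01, Real.volume_Icc]

lemma key1 (p r : ℝ) (hp : 2 < p) (hr : 0 < r) (f : ℝ → ℝ) (x : ℝ) :
    ((‖({y : ℝ | r < |f y|}.indicator f) x‖₊ : ℝ≥0∞)) ^ (2:ℝ) ≤
      ENNReal.ofReal (r ^ (2-p)) * ((‖f x‖₊ : ℝ≥0∞)) ^ p := by
  by_cases hx : r < |f x|
  · rw [Set.indicator_of_mem (by exact hx)]
    have hfx : 0 < |f x| := lt_trans hr hx
    rw [← enorm_eq_nnnorm, ← ofReal_norm, Real.norm_eq_abs,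
      ENNReal.ofReal_rpow_of_pos hfx, ENNReal.ofReal_rpow_of_pos hfx,
      ← ENNReal.ofReal_mul (by positivity)]
    apply ENNReal.ofReal_le_ofReal
    have h1 : |f x| ^ (2:ℝ) = |f x| ^ (2-p) * |f x| ^ p := by
      rw [← Real.rpow_add hfx]; ring_nf
    rw [h1]
    exact mul_le_mul_of_nonneg_right
      (Real.rpow_le_rpow_of_nonpos hr hx.le (by linarith))
      (Real.rpow_nonneg (abs_nonneg _) _)
  · rw [Set.indicator_of_notMem (by exact hx)]
    simp [ENNReal.zero_rpow_of_pos (by norm_num : (0:ℝ) < 2)]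

lemma key2 (p r : ℝ) (hp : 2 < p) (hr : 0 < r) (f : ℝ → ℝ) (x : ℝ) :
    ((‖({y : ℝ | ¬ r < |f y|}.indicator f) x‖₊ : ℝ≥0∞)) ^ p ≤
      ENNReal.ofReal (r ^ (p-2)) * ((‖f x‖₊ : ℝ≥0∞)) ^ (2:ℝ) := by
  by_cases hx : r < |f x|
  · rw [Set.indicator_of_notMem (by exact not_not_intro hx)]
    simp [ENNReal.zero_rpow_of_pos (by linarith : (0:ℝ) < p)]
  · rw [Set.indicator_of_mem (by exact hx)]
    push_neg at hx
    by_cases h0 : f x = 0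
    · simp [h0, ENNReal.zero_rpow_of_pos (by linarith : (0:ℝ) < p)]
    · have hfx : 0 < |f x| := abs_pos.2 h0
      rw [← enorm_eq_nnnorm, ← ofReal_norm, Real.norm_eq_abs,
        ENNReal.ofReal_rpow_of_pos hfx, ENNReal.ofReal_rpow_of_pos hfx,
        ← ENNReal.ofReal_mul (by positivity)]
      apply ENNReal.ofReal_le_ofReal
      have h1 : |f x| ^ p = |f x| ^ (p-2) * |f x| ^ (2:ℝ) := by
        rw [← Real.rpow_add hfx]; ring_nf
      rw [h1]
      exact mul_le_mul_of_nonneg_right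
        (Real.rpow_le_rpow (abs_nonneg _) hx (by linarith))
        (Real.rpow_nonneg (abs_nonneg _) _)

lemma tailBound (p r : ℝ) (hp : 2 < p) (hr : 0 < r) (f : ℝ → ℝ) :
    eLpNorm ({y : ℝ | r < |f y|}.indicator f) 2 μ01 ≤
      ENNReal.ofReal (r ^ ((2-p)/2)) * (eLpNorm f (ENNReal.ofReal p) μ01) ^ (p/2) := by
  have hp0 : 0 < p := by linarith
  rw [eLpNorm_eq_lintegral_rpow_enorm_toReal (by norm_num) (by norm_num),
    eLpNorm_eq_lintegral_rpow_enorm_toReal ((ENNReal.ofReal_pos.2 hp0).ne')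
      (by simp), ENNReal.toReal_ofNat, ENNReal.toReal_ofReal hp0.le]
  calc (∫⁻ x, ((‖({y : ℝ | r < |f y|}.indicator f) x‖₊ : ℝ≥0∞)) ^ (2:ℝ) ∂μ01) ^ (1/(2:ℝ))
      ≤ (∫⁻ x, ENNReal.ofReal (r ^ (2-p)) * ((‖f x‖₊ : ℝ≥0∞)) ^ p ∂μ01) ^ (1/(2:ℝ)) :=
        ENNReal.rpow_le_rpow (lintegral_mono (key1 p r hp hr f)) (by norm_num)
    _ = (ENNReal.ofReal (r ^ (2-p)) * ∫⁻ x, ((‖f x‖₊ : ℝ≥0∞)) ^ p ∂μ01) ^ (1/(2:ℝ)) := by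
        rw [lintegral_const_mul' _ _ ENNReal.ofReal_ne_top]
    _ = ENNReal.ofReal (r ^ (2-p)) ^ (1/(2:ℝ)) *
          (∫⁻ x, ((‖f x‖₊ : ℝ≥0∞)) ^ p ∂μ01) ^ (1/(2:ℝ)) :=
        ENNReal.mul_rpow_of_nonneg _ _ (by norm_num)
    _ = ENNReal.ofReal (r ^ ((2-p)/2)) *
          ((∫⁻ x, ((‖f x‖₊ : ℝ≥0∞)) ^ p ∂μ01) ^ (1/p)) ^ (p/2) := by
        rw [ENNReal.ofReal_rpow_of_pos (Real.rpow_pos_of_pos hr _),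
          ← Real.rpow_mul hr.le, ← ENNReal.rpow_mul]
        have e1 : (2-p)*(1/2) = (2-p)/2 := by ring
        have e2 : (1/p)*(p/2) = 1/(2:ℝ) := by field_simp
        rw [e1, e2]

lemma bodyBound (p r : ℝ) (hp : 2 < p) (hr : 0 < r) (f : ℝ → ℝ) :
    eLpNorm ({y : ℝ | ¬ r < |f y|}.indicator f) (ENNReal.ofReal p) μ01 ≤
      ENNReal.ofReal (r ^ ((p-2)/p)) * (eLpNorm f 2 μ01) ^ (2/p) := by
  have hp0 : 0 < p := by linarith
  rw [eLpNorm_eq_lintegral_rpow_enorm_toReal ((ENNReal.ofReal_pos.2 hp0).ne') (by simp),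
    eLpNorm_eq_lintegral_rpow_enorm_toReal (by norm_num) (by norm_num),
    ENNReal.toReal_ofNat, ENNReal.toReal_ofReal hp0.le]
  calc (∫⁻ x, ((‖({y : ℝ | ¬ r < |f y|}.indicator f) x‖₊ : ℝ≥0∞)) ^ p ∂μ01) ^ (1/p)
      ≤ (∫⁻ x, ENNReal.ofReal (r ^ (p-2)) * ((‖f x‖₊ : ℝ≥0∞)) ^ (2:ℝ) ∂μ01) ^ (1/p) :=
        ENNReal.rpow_le_rpow (lintegral_mono (key2 p r hp hr f)) (by positivity)
    _ = (ENNReal.ofReal (r ^ (p-2)) * ∫⁻ x, ((‖f x‖₊ : ℝ≥0∞)) ^ (2:ℝ) ∂μ01) ^ (1/p) := by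
        rw [lintegral_const_mul' _ _ ENNReal.ofReal_ne_top]
    _ = ENNReal.ofReal (r ^ (p-2)) ^ (1/p) *
          (∫⁻ x, ((‖f x‖₊ : ℝ≥0∞)) ^ (2:ℝ) ∂μ01) ^ (1/p) :=
        ENNReal.mul_rpow_of_nonneg _ _ (by positivity)
    _ = ENNReal.ofReal (r ^ ((p-2)/p)) *
          ((∫⁻ x, ((‖f x‖₊ : ℝ≥0∞)) ^ (2:ℝ) ∂μ01) ^ (1/(2:ℝ))) ^ (2/p) := by
        rw [ENNReal.ofReal_rpow_of_pos (Real.rpow_pos_of_pos hr _),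
          ← Real.rpow_mul hr.le, ← ENNReal.rpow_mul]
        have e1 : (p-2)*(1/p) = (p-2)/p := by ring
        have e2 : (1/(2:ℝ))*(2/p) = 1/p := by field_simp
        rw [e1, e2]


/-- for `p > 2` and `M = {(f_n)_{n,𝒰} : lim_{n,𝒰} ‖f_n‖₂ = 0}`, the projection
`R` maps `(L^p)^𝒰` into `M` and is the identity on `M`; that is, `M = ran R`. -/
theorem stmt12 (p : ℝ) (hp : 2 < p) (U : Ultrafilter ℕ)
    (hU : (U : Filter ℕ) ≤ Filter.cofinite)
    (f g : ℕ → ℝ → ℝ)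
    (hf : ∀ n, MemLp (f n) (ENNReal.ofReal p) μ01)
    (hfb : ∃ C : ℝ, ∀ n, lpNorm p (f n) ≤ C)
    (hg : ∀ n, MemLp (g n) (ENNReal.ofReal p) μ01)
    (hRg : RImage U p f g) :
    -- `R[(f_n)] ∈ M`
    Tendsto (fun n => (eLpNorm (g n) 2 μ01).toReal) U (nhds 0) ∧
    -- if `(f_n)_{n,𝒰} ∈ M` then `R[(f_n)] = (f_n)`
    (Tendsto (fun n => (eLpNorm (f n) 2 μ01).toReal) U (nhds 0) →
      Tendsto (fun n => lpNorm p (fun x => f n x - g n x)) U (nhds 0)) := by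

  have hp0 : (0:ℝ) < p := by linarith
  set q := ENNReal.ofReal p with hq
  have hq1 : (1:ℝ≥0∞) ≤ q := by
    rw [hq, ← ENNReal.ofReal_one]; exact ENNReal.ofReal_le_ofReal (by linarith)
  have h2q : (2:ℝ≥0∞) ≤ q := by
    rw [hq, show (2:ℝ≥0∞) = ENNReal.ofReal 2 by norm_num]
    exact ENNReal.ofReal_le_ofReal hp.le
  set F : ℕ → ℝ → ℝ := fun n => ((hf n).1).mk (f n) with hF
  have hFm : ∀ n, StronglyMeasurable (F n) := fun n => (hf n).1.stronglyMeasurable_mk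
  have hFe : ∀ n, f n =ᵐ[μ01] F n := fun n => (hf n).1.ae_eq_mk
  have indEq : ∀ (n : ℕ) (r : ℝ), {y : ℝ | r < |f n y|}.indicator (f n) =ᵐ[μ01]
      {y : ℝ | r < |F n y|}.indicator (F n) := fun n r =>
    (hFe n).mono fun x hx => by simp only [Set.indicator_apply, Set.mem_setOf_eq, hx]
  have subEq : ∀ (n : ℕ) (r : ℝ),
      (fun x => ({y : ℝ | r < |f n y|}.indicator (f n)) x - g n x) =ᵐ[μ01]
      (fun x => ({y : ℝ | r < |F n y|}.indicator (F n)) x - g n x) := fun n r =>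
    (indEq n r).mono fun x hx => by simp only [hx]
  have hFin : ∀ n, eLpNorm (F n) q μ01 ≠ ⊤ := fun n => by
    rw [← eLpNorm_congr_ae (hFe n)]; exact (hf n).2.ne
  have msInd : ∀ (n : ℕ) (r : ℝ), MeasurableSet {y : ℝ | r < |F n y|} := fun n r =>
    measurableSet_lt measurable_const (hFm n).measurable.abs
  have indSM : ∀ (n : ℕ) (r : ℝ),
      StronglyMeasurable ({y : ℝ | r < |F n y|}.indicator (F n)) := fun n r =>
    (hFm n).indicator (msInd n r)
  have indSM' : ∀ (n : ℕ) (r : ℝ),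
      StronglyMeasurable ({y : ℝ | ¬ r < |F n y|}.indicator (F n)) := fun n r =>
    (hFm n).indicator (msInd n r).compl
  have hAfin : ∀ (n : ℕ) (r : ℝ),
      eLpNorm (fun x => ({y : ℝ | r < |F n y|}.indicator (F n)) x - g n x) q μ01 ≠ ⊤ := by
    intro n r
    refine ne_top_of_le_ne_top ?_
      (eLpNorm_sub_le (indSM n r).aestronglyMeasurable (hg n).1 hq1)
    exact ENNReal.add_ne_top.2
      ⟨ne_top_of_le_ne_top (hFin n) (eLpNorm_mono fun x => norm_indicator_le_norm_self _ _),
        (hg n).2.ne⟩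
  have hAlt : ∀ (n : ℕ) (r : ℝ) (ε : ℝ),
      lpNorm p (fun x => ({y : ℝ | r < |f n y|}.indicator (f n)) x - g n x) < ε →
      eLpNorm (fun x => ({y : ℝ | r < |F n y|}.indicator (F n)) x - g n x) q μ01 <
        ENNReal.ofReal ε := by
    intro n r ε hn
    rw [ENNReal.lt_ofReal_iff_toReal_lt (hAfin n r), ← eLpNorm_congr_ae (subEq n r)]
    exact hn
  obtain ⟨C, hC⟩ := hfb
  set D := max C 1 with hD
  have hD0 : (0:ℝ) < D := lt_of_lt_of_le one_pos (le_max_right _ _)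
  have hfD : ∀ n, eLpNorm (F n) q μ01 ≤ ENNReal.ofReal D := fun n => by
    rw [← eLpNorm_congr_ae (hFe n)]
    exact (ENNReal.le_ofReal_iff_toReal_le (hf n).2.ne hD0.le).2
      (le_trans (hC n) (le_max_left _ _))
  constructor
  · rw [Metric.tendsto_nhds]
    intro ε hε
    obtain ⟨r0, hr0⟩ := hRg (ε/2) (by linarith)
    have hK : (0:ℝ) < D ^ (p/2) := Real.rpow_pos_of_pos hD0 _
    have htend : Tendsto (fun r : ℝ => r ^ ((2-p)/2)) atTop (nhds 0) := by
      have h := tendsto_rpow_neg_atTop (show (0:ℝ) < (p-2)/2 by linarith)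
      have : (fun r : ℝ => r ^ (-((p-2)/2))) = fun r : ℝ => r ^ ((2-p)/2) := by
        funext r; congr 1; ring
      rwa [this] at h
    obtain ⟨r1, hr1⟩ := eventually_atTop.1
      (htend.eventually_lt_const (show (0:ℝ) < (ε/2) / (D ^ (p/2)) by positivity))
    set r := max r0 (max 1 r1) with hr
    have hr_pos : (0:ℝ) < r :=
      lt_of_lt_of_le one_pos (le_trans (le_max_left 1 r1) (le_max_right _ _))
    have hS := hr0 r (le_max_left _ _)
    refine Filter.mem_of_superset hS ?_
    intro n hn
    simp only [Set.mem_setOf_eq] at hn ⊢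
    rw [Real.dist_eq, sub_zero, abs_of_nonneg ENNReal.toReal_nonneg]
    apply ENNReal.toReal_lt_of_lt_ofReal
    have hn' := hAlt n r (ε/2) hn
    have h1 : eLpNorm ({y : ℝ | r < |F n y|}.indicator (F n)) 2 μ01 <
        ENNReal.ofReal (ε/2) := by
      calc eLpNorm ({y : ℝ | r < |F n y|}.indicator (F n)) 2 μ01
          ≤ ENNReal.ofReal (r ^ ((2-p)/2)) * (eLpNorm (F n) q μ01) ^ (p/2) :=
            tailBound p r hp hr_pos (F n)
        _ ≤ ENNReal.ofReal (r ^ ((2-p)/2)) * (ENNReal.ofReal D) ^ (p/2) :=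
            mul_le_mul_right (ENNReal.rpow_le_rpow (hfD n) (by positivity)) _
        _ = ENNReal.ofReal (r ^ ((2-p)/2) * D ^ (p/2)) := by
            rw [ENNReal.ofReal_rpow_of_pos hD0, ← ENNReal.ofReal_mul (by positivity)]
        _ < ENNReal.ofReal (ε/2) := by
            rw [ENNReal.ofReal_lt_ofReal_iff (by linarith)]
            have := hr1 r (le_trans (le_max_right 1 r1) (le_max_right _ _))
            calc r ^ ((2-p)/2) * D ^ (p/2) < ((ε/2) / (D ^ (p/2))) * D ^ (p/2) :=
                  mul_lt_mul_of_pos_right this hK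
              _ = ε/2 := div_mul_cancel₀ _ hK.ne'
    have h2 : eLpNorm (fun x => g n x - ({y : ℝ | r < |F n y|}.indicator (F n)) x) 2 μ01 <
        ENNReal.ofReal (ε/2) := by
      have hswap : (fun x => g n x - ({y : ℝ | r < |F n y|}.indicator (F n)) x) =
          -(fun x => ({y : ℝ | r < |F n y|}.indicator (F n)) x - g n x) := by
        funext x; simp
      rw [hswap, eLpNorm_neg]
      calc eLpNorm (fun x => ({y : ℝ | r < |F n y|}.indicator (F n)) x - g n x) 2 μ01
          ≤ eLpNorm (fun x => ({y : ℝ | r < |F n y|}.indicator (F n)) x - g n x) q μ01 :=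
            eLpNorm_le_eLpNorm_of_exponent_le h2q
              ((indSM n r).aestronglyMeasurable.sub (hg n).1)
        _ < ENNReal.ofReal (ε/2) := hn'
    calc eLpNorm (g n) 2 μ01
        ≤ eLpNorm ({y : ℝ | r < |F n y|}.indicator (F n)) 2 μ01 +
            eLpNorm (fun x => g n x - ({y : ℝ | r < |F n y|}.indicator (F n)) x) 2 μ01 := by
          have hdecomp : g n = fun x => ({y : ℝ | r < |F n y|}.indicator (F n)) x +
              (g n x - ({y : ℝ | r < |F n y|}.indicator (F n)) x) := by
            funext x; ring
          nth_rewrite 1 [hdecomp]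
          exact eLpNorm_add_le (indSM n r).aestronglyMeasurable
            ((hg n).1.sub (indSM n r).aestronglyMeasurable) one_le_two
      _ < ENNReal.ofReal (ε/2) + ENNReal.ofReal (ε/2) :=
          ENNReal.add_lt_add_of_le_of_lt
            (ne_top_of_le_ne_top ENNReal.ofReal_ne_top h1.le) h1.le h2
      _ = ENNReal.ofReal ε := by
          rw [← ENNReal.ofReal_add (by linarith) (by linarith)]; norm_num
  · intro hM
    rw [Metric.tendsto_nhds]
    intro ε hε
    obtain ⟨r0, hr0⟩ := hRg (ε/2) (by linarith)
    set r := max r0 1 with hr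
    have hr_pos : (0:ℝ) < r := lt_of_lt_of_le one_pos (le_max_right _ _)
    set K := r ^ ((p-2)/p) with hKdef
    have hK : (0:ℝ) < K := Real.rpow_pos_of_pos hr_pos _
    set δ := ((ε/2)/K) ^ (p/2) with hδdef
    have hδ : (0:ℝ) < δ := Real.rpow_pos_of_pos (by positivity) _
    have hKδ : K * δ ^ (2/p) = ε/2 := by
      rw [hδdef, ← Real.rpow_mul (by positivity)]
      have hpe : (p/2) * (2/p) = 1 := by field_simp
      rw [hpe, Real.rpow_one, mul_comm, div_mul_cancel₀ _ hK.ne']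
    have hT : ∀ᶠ n in (U : Filter ℕ), (eLpNorm (f n) 2 μ01).toReal < δ := by
      filter_upwards [Metric.tendsto_nhds.1 hM δ hδ] with n hn
      rwa [Real.dist_eq, sub_zero, abs_of_nonneg ENNReal.toReal_nonneg] at hn
    have hSmem : ∀ᶠ n in (U : Filter ℕ),
        lpNorm p (fun x => ({y : ℝ | r < |f n y|}.indicator (f n)) x - g n x) < ε/2 :=
      hr0 r (le_max_left _ _)
    filter_upwards [hT, hSmem] with n hn2 hn1
    rw [Real.dist_eq, sub_zero, abs_of_nonneg
      (show (0:ℝ) ≤ lpNorm p fun x => f n x - g n x from ENNReal.toReal_nonneg)]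
    show (eLpNorm (fun x => f n x - g n x) q μ01).toReal < ε
    apply ENNReal.toReal_lt_of_lt_ofReal
    have hcongr : eLpNorm (fun x => f n x - g n x) q μ01 =
        eLpNorm (fun x => F n x - g n x) q μ01 :=
      eLpNorm_congr_ae ((hFe n).mono fun x hx => by simp only [hx])
    have hdecomp : (fun x => F n x - g n x) = fun x =>
        ({y : ℝ | ¬ r < |F n y|}.indicator (F n)) x +
          (({y : ℝ | r < |F n y|}.indicator (F n)) x - g n x) := by
      funext x
      by_cases hx : r < |F n x|
      · rw [Set.indicator_of_notMem (by exact not_not_intro hx),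
          Set.indicator_of_mem (by exact hx)]
        ring
      · rw [Set.indicator_of_mem (by exact hx), Set.indicator_of_notMem (by exact hx)]
        ring
    rw [hcongr, hdecomp]
    have h1 : eLpNorm ({y : ℝ | ¬ r < |F n y|}.indicator (F n)) q μ01 ≤
        ENNReal.ofReal (ε/2) := by
      have hf2 : eLpNorm (F n) 2 μ01 ≤ ENNReal.ofReal δ := by
        rw [← eLpNorm_congr_ae (hFe n)]
        refine (ENNReal.le_ofReal_iff_toReal_le ?_ hδ.le).2 hn2.le
        exact ne_top_of_le_ne_top (hf n).2.ne
          (eLpNorm_le_eLpNorm_of_exponent_le h2q (hf n).1)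
      calc eLpNorm ({y : ℝ | ¬ r < |F n y|}.indicator (F n)) q μ01
          ≤ ENNReal.ofReal (r ^ ((p-2)/p)) * (eLpNorm (F n) 2 μ01) ^ (2/p) :=
            bodyBound p r hp hr_pos (F n)
        _ ≤ ENNReal.ofReal K * (ENNReal.ofReal δ) ^ (2/p) :=
            mul_le_mul_right (ENNReal.rpow_le_rpow hf2 (by positivity)) _
        _ = ENNReal.ofReal (K * δ ^ (2/p)) := by
            rw [ENNReal.ofReal_rpow_of_pos hδ, ← ENNReal.ofReal_mul hK.le]
        _ = ENNReal.ofReal (ε/2) := by rw [hKδ]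
    have h2 := hAlt n r (ε/2) hn1
    calc eLpNorm (fun x => ({y : ℝ | ¬ r < |F n y|}.indicator (F n)) x +
            (({y : ℝ | r < |F n y|}.indicator (F n)) x - g n x)) q μ01
        ≤ eLpNorm ({y : ℝ | ¬ r < |F n y|}.indicator (F n)) q μ01 +
            eLpNorm (fun x => ({y : ℝ | r < |F n y|}.indicator (F n)) x - g n x) q μ01 :=
          eLpNorm_add_le (indSM' n r).aestronglyMeasurable
            ((indSM n r).aestronglyMeasurable.sub (hg n).1) hq1
      _ < ENNReal.ofReal (ε/2) + ENNReal.ofReal (ε/2) :=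
          ENNReal.add_lt_add_of_le_of_lt
            (ne_top_of_le_ne_top ENNReal.ofReal_ne_top h1) h1 h2
      _ = ENNReal.ofReal ε := by
          rw [← ENNReal.ofReal_add (by linarith) (by linarith)]; norm_num
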